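/- Let V be a vector space over a field F with basis e₁,...,e_{n-1}, and set e₀ = e₁ + ... + e_{n-1}. For a subset a ⊆ {0,1,...,n-1} with a ≠ ∅, a ≠ {0,...,n-1} and 0 ∉ a, the intersection of the span of {eᵢ : i ∈ a} with the span of {eᵢ : i ∉ a} is the one-dimensional subspace spanned by Σ_{i∈a} eᵢ. -/

import Mathlib

/-- Frame representation: with `e₁,…,e_{n-1}` a basis and `e₀ = Σᵢ eᵢ`, for a nonempty
proper subset `a` of `{0,…,n-1}` with `0 ∉ a`, the intersection of `span{eᵢ : i ∈ a}`
and `span{eᵢ : i ∉ a}` is the line spanned by `Σ_{i∈a} eᵢ`. -/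
theorem frame_intersection {F V : Type*} [Field F] [AddCommGroup V] [Module F V]
    (n : ℕ) [NeZero n] (e : Fin n → V)
    (hli : LinearIndependent F (fun i : {i : Fin n // i ≠ 0} => e i.1))
    (h0 : e 0 = ∑ i ∈ Finset.univ.erase (0 : Fin n), e i)
    (a : Finset (Fin n)) (hne : a.Nonempty) (ha : a ≠ Finset.univ) (h0a : (0 : Fin n) ∉ a) :
    Submodule.span F (e '' ↑a) ⊓ Submodule.span F (e '' ↑aᶜ) =
      Submodule.span F {∑ i ∈ a, e i} := by
  classical
  have h0c : (0 : Fin n) ∈ aᶜ := Finset.mem_compl.2 h0a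
  have hpart : Finset.univ.erase (0 : Fin n) = a ∪ aᶜ.erase 0 := by
    ext i
    simp only [Finset.mem_erase, Finset.mem_union, Finset.mem_univ, and_true,
      Finset.mem_compl]
    constructor
    · intro hi
      by_cases h : i ∈ a
      · exact Or.inl h
      · exact Or.inr ⟨hi, h⟩
    · rintro (h | ⟨h, _⟩)
      · rintro rfl; exact h0a h
      · exact h
  have hdisj : Disjoint a (aᶜ.erase 0) := by
    refine Finset.disjoint_left.2 fun i hi hi' => ?_
    exact (Finset.mem_compl.1 (Finset.mem_of_mem_erase hi')) hi
  have hsum : ∀ g : Fin n → V, ∑ i ∈ Finset.univ.erase (0 : Fin n), g i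
      = ∑ i ∈ a, g i + ∑ i ∈ aᶜ.erase 0, g i := by
    intro g; rw [hpart, Finset.sum_union hdisj]
  apply le_antisymm
  · rintro x hx
    obtain ⟨hx1, hx2⟩ := Submodule.mem_inf.1 hx
    rw [Set.image_eq_range] at hx1 hx2
    obtain ⟨c, hc⟩ := (Submodule.mem_span_range_iff_exists_fun F).1 hx1
    obtain ⟨d, hd⟩ := (Submodule.mem_span_range_iff_exists_fun F).1 hx2
    set c' : Fin n → F := fun i => if h : i ∈ a then c ⟨i, h⟩ else 0 with hc'
    set d' : Fin n → F := fun i => if h : i ∈ aᶜ then d ⟨i, h⟩ else 0 with hd'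
    have hc2 : ∑ i ∈ a, c' i • e i = x := by
      rw [← hc, ← Finset.sum_coe_sort a (fun i => c' i • e i)]
      refine Finset.sum_congr rfl fun i _ => ?_
      simp only [hc', dif_pos i.2, Subtype.eta]
    have hd2 : ∑ i ∈ aᶜ, d' i • e i = x := by
      rw [← hd, ← Finset.sum_coe_sort aᶜ (fun i => d' i • e i)]
      refine Finset.sum_congr rfl fun i _ => ?_
      simp only [hd', dif_pos i.2, Subtype.eta]
    have hsplit : d' 0 • e 0 + ∑ i ∈ aᶜ.erase 0, d' i • e i = x := by
      rw [← hd2]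
      exact Finset.add_sum_erase aᶜ (fun i => d' i • e i) h0c
    have key : ∑ i ∈ Finset.univ.erase (0 : Fin n),
        ((if i ∈ a then c' i else -d' i) - d' 0) • e i = 0 := by
      have he0 : d' 0 • e 0 = ∑ i ∈ Finset.univ.erase (0 : Fin n), d' 0 • e i := by
        rw [h0, Finset.smul_sum]
      have expand : ∑ i ∈ Finset.univ.erase (0 : Fin n),
          ((if i ∈ a then c' i else -d' i) - d' 0) • e i
          = (∑ i ∈ Finset.univ.erase (0 : Fin n), (if i ∈ a then c' i else -d' i) • e i)
            - ∑ i ∈ Finset.univ.erase (0 : Fin n), d' 0 • e i := by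
        rw [← Finset.sum_sub_distrib]
        exact Finset.sum_congr rfl fun i _ => by rw [sub_smul]
      have first : ∑ i ∈ Finset.univ.erase (0 : Fin n),
          (if i ∈ a then c' i else -d' i) • e i = d' 0 • e 0 := by
        rw [hsum]
        have h1 : ∑ i ∈ a, (if i ∈ a then c' i else -d' i) • e i = x := by
          rw [← hc2]
          exact Finset.sum_congr rfl fun i hi => by rw [if_pos hi]
        have h2 : ∑ i ∈ aᶜ.erase 0, (if i ∈ a then c' i else -d' i) • e i
            = -(x - d' 0 • e 0) := by
          have : ∑ i ∈ aᶜ.erase 0, (if i ∈ a then c' i else -d' i) • e i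
              = -∑ i ∈ aᶜ.erase 0, d' i • e i := by
            rw [← Finset.sum_neg_distrib]
            refine Finset.sum_congr rfl fun i hi => ?_
            rw [if_neg (Finset.mem_compl.1 (Finset.mem_of_mem_erase hi)), neg_smul]
          rw [this]
          rw [eq_sub_of_add_eq' hsplit]
        rw [h1, h2]; abel
      rw [expand, first, ← he0, sub_self]
    have hzero : ∀ i : {i : Fin n // i ≠ 0},
        ((if i.1 ∈ a then c' i.1 else -d' i.1) - d' 0) = 0 := by
      refine Fintype.linearIndependent_iff.1 hli
        (fun i => (if i.1 ∈ a then c' i.1 else -d' i.1) - d' 0) ?_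
      rw [← key]
      exact (Finset.sum_subtype (Finset.univ.erase 0)
        (fun i => by simp only [Finset.mem_erase, Finset.mem_univ, and_true])
        (fun i => ((if i ∈ a then c' i else -d' i) - d' 0) • e i)).symm
    have hca : ∀ i ∈ a, c' i = d' 0 := by
      intro i hi
      have hi0 : i ≠ 0 := fun h => h0a (h ▸ hi)
      have := hzero ⟨i, hi0⟩
      simp only [if_pos hi, sub_eq_zero] at this
      exact this
    have hx' : x = d' 0 • ∑ i ∈ a, e i := by
      rw [Finset.smul_sum, ← hc2]
      exact Finset.sum_congr rfl fun i hi => by rw [hca i hi]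
    rw [hx']
    exact Submodule.smul_mem _ _ (Submodule.mem_span_singleton_self _)
  · rw [Submodule.span_singleton_le_iff_mem]
    refine Submodule.mem_inf.2 ⟨?_, ?_⟩
    · exact Submodule.sum_mem _ fun i hi => Submodule.subset_span ⟨i, hi, rfl⟩
    · have hrepr : ∑ i ∈ a, e i = e 0 - ∑ i ∈ aᶜ.erase 0, e i := by
        rw [h0, hsum]; abel
      rw [hrepr]
      exact Submodule.sub_mem _ (Submodule.subset_span ⟨0, h0c, rfl⟩)
        (Submodule.sum_mem _ fun i hi => Submodule.subset_span
          ⟨i, Finset.mem_of_mem_erase hi, rfl⟩)
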